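/- Let n, ℓ ≥ 1 and m ≥ 2 be integers, ε > 0, and let C : (ZMod 2)^{m−1} → ZMod 2. Then there exists a function B : ({0,1}^{ℓn})^{m−1} → Finset({0,1}^{ℓn}) all of whose output sets have size at most m²/ε², such that the following holds for every function X̄ : ({0,1}^n)^ℓ → {0,1}^{ℓn}: if Pr_{x̄,r}(C(b(X̄(x̄−m+1),r), b(X̄(x̄−m+2),r), …, b(X̄(x̄−1),r)) = b(X̄(x̄),r)) ≥ 1/2 + ε/m, where x̄ is uniform on ({0,1}^n)^ℓ and r is uniform on {0,1}^{ℓn}, then for at least (ε/m)·2^{ℓn} tuples x̄ ∈ ({0,1}^n)^ℓ it holds that X̄(x̄) ∈ B(X̄(x̄−m+1), …, X̄(x̄−1)). -/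

import Mathlib

open scoped Classical

abbrev Str (k : ℕ) : Type := Fin k → ZMod 2

/-- inner product mod 2 of two block-strings in `({0,1}^n)^ℓ ≅ {0,1}^{ℓn}` -/
def ipb {ℓ n : ℕ} (x r : Fin ℓ → Str n) : ZMod 2 := ∑ i, ∑ j, x i j * r i j

/-- fraction of elements of a finite type satisfying `p` (probability under uniform distribution) -/
noncomputable def fr {α : Type} [Fintype α] (p : α → Prop) : ℝ :=
  ((Finset.univ.filter p).card : ℝ) / (Fintype.card α : ℝ)

/-- little-endian identification of `{0,1}^n` with `Fin (2^n)` -/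
def strToFin (n : ℕ) (x : Str n) : Fin (2 ^ n) :=
  ⟨∑ j : Fin n, (x j).val * 2 ^ (j : ℕ), by
    have hgeom : ∀ M : ℕ, (∑ j ∈ Finset.range M, 2 ^ j) < 2 ^ M := by
      intro M
      induction M with
      | zero => simp
      | succ K ih =>
        rw [Finset.sum_range_succ, pow_succ]
        omega
    calc ∑ j : Fin n, (x j).val * 2 ^ (j : ℕ)
        ≤ ∑ j : Fin n, 1 * 2 ^ (j : ℕ) := by
          refine Finset.sum_le_sum fun j _ => Nat.mul_le_mul_right _ ?_
          exact Nat.lt_succ_iff.mp (ZMod.val_lt (x j))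
      _ = ∑ j ∈ Finset.range n, 2 ^ j := by
          simp only [one_mul]
          exact Fin.sum_univ_eq_sum_range (fun j => 2 ^ j) n
      _ < 2 ^ n := hgeom n⟩

/-- inverse identification of `Fin (2^n)` with `{0,1}^n` -/
def finToStr (n : ℕ) (v : Fin (2 ^ n)) : Str n :=
  fun j => (((v : ℕ) / 2 ^ (j : ℕ)) % 2 : ℕ)

/-- addition of an integer constant modulo `2^n`, on `{0,1}^n` identified with `ZMod (2^n)` -/
def shiftStr (n : ℕ) (x : Str n) (k : ℤ) : Str n :=
  haveI : NeZero (2 ^ n) := ⟨(by positivity : (0:ℕ) < 2 ^ n).ne'⟩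
  finToStr n ⟨(((strToFin n x : ℕ) : ZMod (2 ^ n)) + (k : ZMod (2 ^ n))).val, ZMod.val_lt _⟩


namespace Stmt15Aux

noncomputable def chi (a : ZMod 2) : ℝ := (-1 : ℝ) ^ a.val

lemma val2 : ((2:ZMod 2)).val = 0 := rfl
lemma val1 : ((1:ZMod 2)).val = 1 := rfl

lemma chi_add (a b : ZMod 2) : chi (a + b) = chi a * chi b := by
  unfold chi; rw [ZMod.val_add]
  fin_cases a <;> fin_cases b <;> norm_num [chi, val2, val1, show ((1:ZMod 2)+1).val = 0 from rfl] <;> simp [ZMod.val]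

lemma chi_zero : chi 0 = 1 := by simp [chi]

lemma chi_one : chi 1 = -1 := by simp [chi, val1]

lemma chi_sq (a : ZMod 2) : chi a * chi a = 1 := by
  fin_cases a <;> simp [chi, val1] <;> simp [ZMod.val]

lemma chi_eq_ite (a b : ZMod 2) : chi (a + b) = if a = b then (1:ℝ) else -1 := by
  have h01 : ∀ x : ZMod 2, x = 0 ∨ x = 1 := by intro x; fin_cases x; exact Or.inl rfl; exact Or.inr rfl
  rcases h01 a with rfl | rfl <;> rcases h01 b with rfl | rfl <;> simp [chi_add, chi_zero, chi_one]

lemma ipb_add_left {ℓ n : ℕ} (x y r : Fin ℓ → Str n) :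
    ipb (x + y) r = ipb x r + ipb y r := by
  simp [ipb, add_mul, Finset.sum_add_distrib]

lemma ipb_add_right {ℓ n : ℕ} (x r s : Fin ℓ → Str n) :
    ipb x (r + s) = ipb x r + ipb x s := by
  simp [ipb, mul_add, Finset.sum_add_distrib]

lemma sum_chi_ipb_eq_zero {ℓ n : ℕ} (z : Fin ℓ → Str n) (hz : z ≠ 0) :
    ∑ r : Fin ℓ → Str n, chi (ipb z r) = 0 := by
  obtain ⟨i, hi⟩ := Function.ne_iff.mp hz
  obtain ⟨j, hj⟩ := Function.ne_iff.mp hi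
  have hzij : z i j = 1 := by
    have hall : ∀ a : ZMod 2, a ≠ 0 → a = 1 := by decide
    exact hall _ (by simpa using hj)
  set e : Fin ℓ → Str n := fun i' j' => if i' = i ∧ j' = j then 1 else 0 with he
  have hie : ipb z e = 1 := by
    rw [ipb]
    rw [Finset.sum_eq_single i]
    · rw [Finset.sum_eq_single j]
      · simp [he, hzij]
      · intro b _ hb; simp [he, hb]
      · simp
    · intro b _ hb
      apply Finset.sum_eq_zero
      intro j' _
      simp [he, hb]
    · simp
  have key : ∑ r : Fin ℓ → Str n, chi (ipb z r)
      = ∑ r : Fin ℓ → Str n, chi (ipb z (r + e)) := by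
    exact (Fintype.sum_equiv (Equiv.addRight e) _ _ (fun r => rfl)).symm
  have : ∑ r : Fin ℓ → Str n, chi (ipb z (r + e))
      = - ∑ r : Fin ℓ → Str n, chi (ipb z r) := by
    rw [← Finset.sum_neg_distrib]
    apply Finset.sum_congr rfl
    intro r _
    rw [ipb_add_right, hie, chi_add, chi_one]
    ring
  linarith [key, this]

lemma chi_sq' (a : ZMod 2) : chi a ^ 2 = 1 := by rw [sq, chi_sq]

lemma ipb_zero_left {ℓ n : ℕ} (r : Fin ℓ → Str n) : ipb 0 r = 0 := by simp [ipb]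

lemma count_lemma {ℓ n : ℕ} (g : (Fin ℓ → Str n) → ZMod 2) (θ : ℝ) (hθ : 0 < θ) :
    ((Finset.univ.filter (fun y : Fin ℓ → Str n =>
        θ * (Fintype.card (Fin ℓ → Str n) : ℝ) ≤ ∑ r : Fin ℓ → Str n, chi (g r + ipb y r))).card : ℝ)
      ≤ 1 / θ ^ 2 := by
  set N : ℝ := (Fintype.card (Fin ℓ → Str n) : ℝ) with hNdef
  have hN0 : 0 < N := by rw [hNdef]; exact_mod_cast (Fintype.card_pos : 0 < Fintype.card (Fin ℓ → Str n))
  set S := (Finset.univ.filter (fun y : Fin ℓ → Str n =>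
      θ * N ≤ ∑ r : Fin ℓ → Str n, chi (g r + ipb y r))) with hS
  set s : ℝ := (S.card : ℝ) with hs
  have hs0 : 0 ≤ s := by positivity
  -- T lower bound
  have hT1 : s * (θ * N) ≤ ∑ y ∈ S, ∑ r : Fin ℓ → Str n, chi (g r + ipb y r) := by
    have := Finset.card_nsmul_le_sum S
      (fun y => ∑ r : Fin ℓ → Str n, chi (g r + ipb y r)) (θ * N)
      (fun y hy => (Finset.mem_filter.mp hy).2)
    simpa [nsmul_eq_mul, hs] using this
  -- rewrite T
  have hT2 : ∑ y ∈ S, ∑ r : Fin ℓ → Str n, chi (g r + ipb y r)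
      = ∑ r : Fin ℓ → Str n, chi (g r) * (∑ y ∈ S, chi (ipb y r)) := by
    rw [Finset.sum_comm]
    exact Finset.sum_congr rfl fun r _ => by
      rw [Finset.mul_sum]
      exact Finset.sum_congr rfl fun y _ => chi_add _ _
  -- Cauchy-Schwarz
  have hCS : (∑ y ∈ S, ∑ r : Fin ℓ → Str n, chi (g r + ipb y r)) ^ 2
      ≤ (∑ r : Fin ℓ → Str n, chi (g r) ^ 2)
        * ∑ r : Fin ℓ → Str n, (∑ y ∈ S, chi (ipb y r)) ^ 2 := by
    rw [hT2]
    exact Finset.sum_mul_sq_le_sq_mul_sq _ _ _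
  have h3 : (∑ r : Fin ℓ → Str n, chi (g r) ^ 2) = N := by
    simp [chi_sq', hNdef]
  have h4 : (∑ r : Fin ℓ → Str n, (∑ y ∈ S, chi (ipb y r)) ^ 2) = s * N := by
    have expand : ∀ r : Fin ℓ → Str n, (∑ y ∈ S, chi (ipb y r)) ^ 2
        = ∑ y ∈ S, ∑ y' ∈ S, chi (ipb y r) * chi (ipb y' r) := by
      intro r; rw [sq, Finset.sum_mul_sum]
    rw [Finset.sum_congr rfl fun r _ => expand r, Finset.sum_comm]
    have inner : ∀ y ∈ S, (∑ r : Fin ℓ → Str n, ∑ y' ∈ S, chi (ipb y r) * chi (ipb y' r)) = N := by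
      intro y hy
      rw [Finset.sum_comm]
      rw [Finset.sum_eq_single_of_mem y hy]
      · simp [chi_sq, hNdef]
      · intro y' hy' hne
        have hzz : y' + y ≠ 0 := by
          intro h0
          apply hne
          funext i j
          have := congrFun (congrFun h0 i) j
          have h2 : ∀ a b : ZMod 2, a + b = 0 → a = b := by decide
          exact h2 _ _ this
        have := sum_chi_ipb_eq_zero (y' + y) hzz
        rw [← this]
        exact Finset.sum_congr rfl fun r _ => by
          rw [ipb_add_left, chi_add]; ring
    rw [Finset.sum_congr rfl inner, Finset.sum_const, nsmul_eq_mul, hs]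
  have hsq : (s * (θ * N)) ^ 2 ≤ N * (s * N) := by
    calc (s * (θ * N)) ^ 2 ≤ (∑ y ∈ S, ∑ r : Fin ℓ → Str n, chi (g r + ipb y r)) ^ 2 := by
          apply pow_le_pow_left₀ (by positivity) hT1
      _ ≤ _ := by rw [h3, h4] at hCS; exact hCS
  -- conclude
  have hkey : s ^ 2 * θ ^ 2 ≤ s := by
    have hN2 : 0 < N ^ 2 := by positivity
    nlinarith [hsq, hN0]
  rcases eq_or_lt_of_le hs0 with h0 | h0
  · rw [← h0]; positivity
  · rw [le_div_iff₀ (by positivity)]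
    nlinarith [hkey, h0]
end Stmt15Aux

open Stmt15Aux in
set_option maxHeartbeats 1600000 in
theorem stmt15 (n ℓ m : ℕ) (hn : 1 ≤ n) (hℓ : 1 ≤ ℓ) (hm : 2 ≤ m) (ε : ℝ) (hε : 0 < ε)
    (C : (Fin (m - 1) → ZMod 2) → ZMod 2) :
    ∃ B : (Fin (m - 1) → (Fin ℓ → Str n)) → Finset (Fin ℓ → Str n),
      (∀ v, ((B v).card : ℝ) ≤ (m : ℝ) ^ 2 / ε ^ 2) ∧
      ∀ Xb : (Fin ℓ → Str n) → (Fin ℓ → Str n),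
        1 / 2 + ε / m ≤ fr (fun p : (Fin ℓ → Str n) × (Fin ℓ → Str n) =>
            C (fun j : Fin (m - 1) =>
                ipb (Xb (fun i => shiftStr n (p.1 i) ((j : ℤ) + 1 - m))) p.2)
              = ipb (Xb p.1) p.2) →
        (ε / m) * 2 ^ (ℓ * n) ≤
          ((Finset.univ.filter (fun x : Fin ℓ → Str n =>
            Xb x ∈ B (fun j : Fin (m - 1) =>
              Xb (fun i => shiftStr n (x i) ((j : ℤ) + 1 - m))))).card : ℝ) := by
  have hm0 : (0:ℝ) < m := by positivity
  have hθ : 0 < ε / m := div_pos hε hm0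
  set θ : ℝ := ε / m with hθdef
  set N : ℝ := (Fintype.card (Fin ℓ → Str n) : ℝ) with hNdef
  have hN0 : 0 < N := by
    rw [hNdef]; exact_mod_cast (Fintype.card_pos : 0 < Fintype.card (Fin ℓ → Str n))
  have hNval : N = 2 ^ (ℓ * n) := by
    have : Fintype.card (Fin ℓ → Str n) = 2 ^ (ℓ * n) := by
      rw [Fintype.card_fun, Fintype.card_fun]
      simp [ZMod.card, ← pow_mul, Nat.mul_comm]
    rw [hNdef, this]; push_cast; ring
  refine ⟨fun v => Finset.univ.filter (fun y : Fin ℓ → Str n =>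
      θ * (Fintype.card (Fin ℓ → Str n) : ℝ)
        ≤ ∑ r : Fin ℓ → Str n, chi (C (fun j => ipb (v j) r) + ipb y r)), ?_, ?_⟩
  · intro v
    have hcl := count_lemma (fun r => C (fun j => ipb (v j) r)) θ hθ
    calc ((Finset.univ.filter _).card : ℝ) ≤ 1 / θ ^ 2 := hcl
      _ = (m:ℝ) ^ 2 / ε ^ 2 := by
          rw [hθdef, div_pow, one_div_div]
  · intro Xb h
    -- counting function
    set a : (Fin ℓ → Str n) → ℕ := fun x => (Finset.univ.filter (fun r : Fin ℓ → Str n =>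
        C (fun j : Fin (m - 1) => ipb (Xb (fun i => shiftStr n (x i) ((j : ℤ) + 1 - m))) r)
          = ipb (Xb x) r)).card with hadef
    have haN : ∀ x, (a x : ℝ) ≤ N := by
      intro x
      rw [hNdef]
      exact_mod_cast Finset.card_filter_le _ _
    -- pair count = sum of fibers
    have key1 : ((Finset.univ.filter (fun p : (Fin ℓ → Str n) × (Fin ℓ → Str n) =>
        C (fun j : Fin (m - 1) =>
            ipb (Xb (fun i => shiftStr n (p.1 i) ((j : ℤ) + 1 - m))) p.2)
          = ipb (Xb p.1) p.2)).card) = ∑ x : Fin ℓ → Str n, a x := by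
      rw [Finset.card_filter, Fintype.sum_prod_type]
      exact Finset.sum_congr rfl fun x _ => (Finset.card_filter _ _).symm
    -- hypothesis as sum bound
    have key2 : (1/2 + θ) * (N * N) ≤ ∑ x : Fin ℓ → Str n, (a x : ℝ) := by
      have hcardprod : (Fintype.card ((Fin ℓ → Str n) × (Fin ℓ → Str n)) : ℝ) = N * N := by
        rw [Fintype.card_prod, hNdef]; push_cast; ring
      rw [fr, hcardprod] at h
      have := (le_div_iff₀ (by positivity : (0:ℝ) < N * N)).mp h
      calc (1/2 + θ) * (N * N) ≤ _ := this
        _ = ∑ x : Fin ℓ → Str n, (a x : ℝ) := by exact_mod_cast key1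
    -- correlation identity
    have key3 : ∀ x : Fin ℓ → Str n,
        (∑ r : Fin ℓ → Str n, chi (C (fun j : Fin (m - 1) =>
            ipb (Xb (fun i => shiftStr n (x i) ((j : ℤ) + 1 - m))) r) + ipb (Xb x) r))
          = 2 * (a x : ℝ) - N := by
      intro x
      have step : ∀ r : Fin ℓ → Str n,
          chi (C (fun j : Fin (m - 1) =>
              ipb (Xb (fun i => shiftStr n (x i) ((j : ℤ) + 1 - m))) r) + ipb (Xb x) r)
            = 2 * (if C (fun j : Fin (m - 1) =>
              ipb (Xb (fun i => shiftStr n (x i) ((j : ℤ) + 1 - m))) r)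
                = ipb (Xb x) r then (1:ℝ) else 0) - 1 := by
        intro r
        rw [chi_eq_ite]
        split_ifs <;> norm_num
      rw [Finset.sum_congr rfl fun r _ => step r, Finset.sum_sub_distrib, ← Finset.mul_sum,
        Finset.sum_boole, Finset.sum_const, nsmul_eq_mul, mul_one, hadef, hNdef]
      simp [Finset.card_univ]
    -- membership iff
    have hmem : ∀ x : Fin ℓ → Str n,
        (Xb x ∈ Finset.univ.filter (fun y : Fin ℓ → Str n =>
          θ * (Fintype.card (Fin ℓ → Str n) : ℝ)
            ≤ ∑ r : Fin ℓ → Str n, chi (C (fun j : Fin (m-1) =>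
                ipb (Xb (fun i => shiftStr n (x i) ((j : ℤ) + 1 - m))) r) + ipb y r))
          ↔ θ * N ≤ 2 * (a x : ℝ) - N) := by
      intro x
      rw [Finset.mem_filter]
      simp only [Finset.mem_univ, true_and]
      rw [key3 x, hNdef]
    -- good set
    set G := Finset.univ.filter (fun x : Fin ℓ → Str n =>
        θ * N ≤ 2 * (a x : ℝ) - N) with hGdef
    have hGeq : (Finset.univ.filter (fun x : Fin ℓ → Str n =>
        Xb x ∈ Finset.univ.filter (fun y : Fin ℓ → Str n =>
          θ * (Fintype.card (Fin ℓ → Str n) : ℝ)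
            ≤ ∑ r : Fin ℓ → Str n, chi (C (fun j : Fin (m-1) =>
                ipb (Xb (fun i => shiftStr n (x i) ((j : ℤ) + 1 - m))) r) + ipb y r)))) = G := by
      apply Finset.filter_congr
      intro x _
      simp only [hmem x, hGdef]
    set c : ℝ := (G.card : ℝ) with hcdef
    have hc0 : 0 ≤ c := by positivity
    have hcN : c ≤ N := by
      rw [hcdef, hNdef]
      exact_mod_cast Finset.card_filter_le _ _
    -- split the sum
    have hsplit : ∑ x : Fin ℓ → Str n, (a x : ℝ)
        = (∑ x ∈ G, (a x : ℝ)) + ∑ x ∈ Finset.univ.filter (fun x : Fin ℓ → Str n =>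
            ¬ (θ * N ≤ 2 * (a x : ℝ) - N)), (a x : ℝ) := by
      rw [hGdef]
      exact (Finset.sum_filter_add_sum_filter_not _ _ _).symm
    have hb1 : (∑ x ∈ G, (a x : ℝ)) ≤ c * N := by
      calc (∑ x ∈ G, (a x : ℝ)) ≤ ∑ x ∈ G, N := Finset.sum_le_sum fun x _ => haN x
        _ = c * N := by rw [Finset.sum_const, nsmul_eq_mul, hcdef]
    have hcardnot : ((Finset.univ.filter (fun x : Fin ℓ → Str n =>
        ¬ (θ * N ≤ 2 * (a x : ℝ) - N))).card : ℝ) = N - c := by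
      have h2 : (Finset.univ.filter (fun x : Fin ℓ → Str n =>
          θ * N ≤ 2 * (a x : ℝ) - N)).card
        + (Finset.univ.filter (fun x : Fin ℓ → Str n =>
          ¬ (θ * N ≤ 2 * (a x : ℝ) - N))).card = Fintype.card (Fin ℓ → Str n) := by
        simpa using Finset.card_filter_add_card_filter_not (s := Finset.univ)
          (p := fun x : Fin ℓ → Str n => θ * N ≤ 2 * (a x : ℝ) - N)
      have h3 := congrArg (fun k : ℕ => (k : ℝ)) h2
      push_cast at h3
      rw [hcdef, hGdef, hNdef]
      linarith [h3]
    have hb2 : (∑ x ∈ Finset.univ.filter (fun x : Fin ℓ → Str n =>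
        ¬ (θ * N ≤ 2 * (a x : ℝ) - N)), (a x : ℝ)) ≤ (N - c) * ((1/2 + θ/2) * N) := by
      calc (∑ x ∈ Finset.univ.filter (fun x : Fin ℓ → Str n =>
            ¬ (θ * N ≤ 2 * (a x : ℝ) - N)), (a x : ℝ))
          ≤ ∑ x ∈ Finset.univ.filter (fun x : Fin ℓ → Str n =>
            ¬ (θ * N ≤ 2 * (a x : ℝ) - N)), ((1/2 + θ/2) * N) := by
            apply Finset.sum_le_sum
            intro x hx
            have := (Finset.mem_filter.mp hx).2
            push_neg at this
            linarith
        _ = (N - c) * ((1/2 + θ/2) * N) := by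
            rw [Finset.sum_const, nsmul_eq_mul, hcardnot]
    -- theta is at most 1/2
    have hsumN : ∑ x : Fin ℓ → Str n, (a x : ℝ) ≤ N * N := by
      calc ∑ x : Fin ℓ → Str n, (a x : ℝ) ≤ ∑ _x : Fin ℓ → Str n, N :=
            Finset.sum_le_sum fun x _ => haN x
        _ = N * N := by rw [Finset.sum_const, nsmul_eq_mul, hNdef]; simp [Finset.card_univ]
    have hhalf : θ ≤ 1/2 := by nlinarith [key2, hsumN, mul_pos hN0 hN0]
    -- combine
    have hcomb : (1/2 + θ) * (N * N) ≤ c * N + (N - c) * ((1/2 + θ/2) * N) := by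
      calc (1/2 + θ) * (N * N) ≤ ∑ x : Fin ℓ → Str n, (a x : ℝ) := key2
        _ = _ := hsplit
        _ ≤ c * N + (N - c) * ((1/2 + θ/2) * N) := by linarith [hb1, hb2]
    have hdiv : (1/2 + θ) * N ≤ c + (N - c) * (1/2 + θ/2) := by
      have h' : ((1/2 + θ) * N) * N ≤ (c + (N - c) * (1/2 + θ/2)) * N := by nlinarith [hcomb]
      exact le_of_mul_le_mul_right h' hN0
    have hfinal : θ * N ≤ c := by nlinarith [hdiv, mul_nonneg hc0 hθ.le]
    rw [hNval] at hfinal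
    have hcard_eq := congrArg (fun s : Finset (Fin ℓ → Str n) => ((s.card : ℕ) : ℝ)) hGeq
    calc θ * (2:ℝ) ^ (ℓ * n) ≤ c := hfinal
      _ = _ := by rw [hcdef]; exact hcard_eq.symm
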